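/- Let E, F be finite-dimensional real inner product spaces, Y ⊆ F a nonempty compact convex set with ‖y₁ − y₂‖ ≤ D for all y₁, y₂ ∈ Y (D > 0), g : F → ℝ convex, γ > 0, ε > 0, and let Φ : E × F → ℝ be differentiable with ‖∇_xΦ(x,y) − ∇_xΦ(x′,y′)‖ ≤ L_xx‖x−x′‖ + L_xy‖y−y′‖ and ‖∇_yΦ(x,y) − ∇_yΦ(x′,y′)‖ ≤ L_yx‖x−x′‖ + L_yy‖y−y′‖ for all x,x′ ∈ E and y,y′ ∈ Y, where L_xy, L_yy > 0. Assume that for each y ∈ Y the function Φ(·,y) is γ-weakly convex and for each x ∈ E the function Φ(x,·) is concave. Let φ(x) = max_{y∈Y}(Φ(x,y) − g(y)), λ = 1/(2γ), and let φ_λ denote the Moreau envelope of φ. Fix ŷ₀ ∈ Y, set μ̂ = min{ ε²/(24·γ·D²), (L_yy/L_xy)·ε/(2·√6·D) }, Φ̂(x,y) = Φ(x,y) − (μ̂/2)‖y − ŷ₀‖², φ̂(x) = max_{y∈Y}(Φ̂(x,y) − g(y)), and let ŷ_*(x) be the unique maximizer over Y of y ↦ Φ̂(x,y) − g(y). Let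 x_ε ∈ E and assume φ̂ is differentiable at x_ε with ∇φ̂(x_ε) = ∇_xΦ(x_ε, ŷ_*(x_ε)) and ‖∇φ̂(x_ε)‖ ≤ ε/(2√6). Then ‖∇φ_λ(x_ε)‖ ≤ ε; equivalently, 2γ·‖x_ε − prox_{λφ}(x_ε)‖ ≤ ε. -/

import Mathlib

open scoped RealInnerProductSpace

/-- A convex function composed with a line is convex on `ℝ`. -/
lemma convexOn_comp_line {E : Type*} [NormedAddCommGroup E] [InnerProductSpace ℝ E]
    {f : E → ℝ} (hf : ConvexOn ℝ Set.univ f) (x d : E) :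
    ConvexOn ℝ Set.univ (fun t : ℝ => f (x + t • d)) := by
  refine ⟨convex_univ, ?_⟩
  intro t1 _ t2 _ a b ha hb hab
  have h : x + (a • t1 + b • t2) • d = a • (x + t1 • d) + b • (x + t2 • d) := by
    have h2 : a • x + b • x = x := by rw [← add_smul, hab, one_smul]
    rw [add_smul, smul_assoc, smul_assoc, smul_add, smul_add]
    nth_rewrite 1 [← h2]
    abel
  simp only []
  rw [h]
  exact hf.2 (Set.mem_univ _) (Set.mem_univ _) ha hb hab

/-- Directional-derivative subgradient inequality for convex functions. -/
lemma convex_dirderiv_le {E : Type*} [NormedAddCommGroup E] [InnerProductSpace ℝ E]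
    {f : E → ℝ} (hf : ConvexOn ℝ Set.univ f) {x d : E} {c : ℝ}
    (hder : HasDerivAt (fun t : ℝ => f (x + t • d)) c 0) :
    c ≤ f (x + d) - f x := by
  have hconv := convexOn_comp_line hf x d
  have h := hconv.le_slope_of_hasDerivWithinAt_Ioi (Set.mem_univ (0:ℝ)) (Set.mem_univ (1:ℝ))
    one_pos hder.hasDerivWithinAt
  rw [slope_def_field] at h
  simpa using h

/-- Sup of a convexly-perturbed family is convex after the same perturbation. -/
lemma convexOn_sup_family {E F : Type*} [NormedAddCommGroup E] [InnerProductSpace ℝ E]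
    (Y : Set F) (γ : ℝ) (Φ : E → F → ℝ) (c : F → ℝ)
    (hwc : ∀ y ∈ Y, ConvexOn ℝ Set.univ (fun x => Φ x y + γ / 2 * ‖x‖ ^ 2))
    (ψ : E → ℝ) (hψ : ∀ x, IsGreatest ((fun y => Φ x y - c y) '' Y) (ψ x)) :
    ConvexOn ℝ Set.univ (fun x => ψ x + γ / 2 * ‖x‖ ^ 2) := by
  refine ⟨convex_univ, ?_⟩
  intro x1 _ x2 _ a b ha hb hab
  obtain ⟨y, hy, hval⟩ := (hψ (a • x1 + b • x2)).1
  have h1 : Φ x1 y - c y ≤ ψ x1 := (hψ x1).2 ⟨y, hy, rfl⟩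
  have h2 : Φ x2 y - c y ≤ ψ x2 := (hψ x2).2 ⟨y, hy, rfl⟩
  have h3 := (hwc y hy).2 (Set.mem_univ x1) (Set.mem_univ x2) ha hb hab
  simp only [smul_eq_mul] at h3 ⊢
  simp only [] at hval
  have hc : a * c y + b * c y = c y := by rw [← add_mul, hab, one_mul]
  nlinarith [mul_le_mul_of_nonneg_left h1 ha, mul_le_mul_of_nonneg_left h2 hb, hval, hab, hc]

/-- The closing arithmetic computation. -/
lemma wcmc_arith {γ ε r b μ D s : ℝ} (hγ : 0 < γ) (hε : 0 < ε) (hr : 0 ≤ r) (hb : 0 ≤ b)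
    (hs : 2 ≤ s) (hbs : b * (2 * s) ≤ ε) (hμ : μ * (24 * γ * D ^ 2) ≤ ε ^ 2)
    (hchain : 5 * γ / 4 * r ^ 2 ≤ b * r + γ / 2 * r ^ 2 + μ / 2 * D ^ 2)
    (hcon : ε < 2 * γ * r) : False := by
  have hrpos : 0 < r := by
    rcases eq_or_lt_of_le hr with h | h
    · exfalso; rw [← h] at hcon; simp at hcon; linarith
    · exact h
  have h4br : 4 * (b * r) ≤ ε * r := by
    nlinarith [mul_le_mul_of_nonneg_right hbs hr,
      mul_nonneg (mul_nonneg hb hr) (by linarith : (0:ℝ) ≤ s - 2)]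
  have hεr : ε * r < 2 * γ * r ^ 2 := by
    nlinarith [mul_lt_mul_of_pos_right hcon hrpos]
  have hε2 : ε ^ 2 < 4 * γ ^ 2 * r ^ 2 := by
    nlinarith [mul_lt_mul_of_pos_left hcon hε,
      mul_lt_mul_of_pos_right hcon (by positivity : (0:ℝ) < 2 * γ * r)]
  have hμD : μ * D ^ 2 / 2 < γ / 12 * r ^ 2 := by
    nlinarith [hμ, hε2, hγ, mul_pos hγ hγ]
  nlinarith [hchain, h4br, hεr, hμD, mul_pos hγ (mul_pos hrpos hrpos)]


/-- Smoothing for weakly convex–merely concave problems: if `x_ε` is an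
`ε/(2√6)`-stationary point of the smoothed primal function
`φ̂(x) = max_{y∈Y}(Φ(x,y) − (μ̂/2)‖y − ŷ₀‖² − g(y))` with
`μ̂ = min{ε²/(24γD²), (L_yy/L_xy)·ε/(2√6·D)}`, then `x_ε` is `ε`-stationary for the
Moreau envelope of `φ(x) = max_{y∈Y}(Φ(x,y) − g(y))` with `λ = 1/(2γ)`:
`2γ‖x_ε − prox_{λφ}(x_ε)‖ ≤ ε`. -/
theorem wcmc_smoothing_stationarity
    {E F : Type*} [NormedAddCommGroup E] [InnerProductSpace ℝ E] [FiniteDimensional ℝ E]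
    [NormedAddCommGroup F] [InnerProductSpace ℝ F] [FiniteDimensional ℝ F]
    (Y : Set F) (hYne : Y.Nonempty) (hYcomp : IsCompact Y) (hYconv : Convex ℝ Y)
    (D : ℝ) (hD : 0 < D) (hdiam : ∀ y₁ ∈ Y, ∀ y₂ ∈ Y, ‖y₁ - y₂‖ ≤ D)
    (g : F → ℝ) (hg : ConvexOn ℝ Set.univ g)
    (γ ε : ℝ) (hγ : 0 < γ) (hε : 0 < ε)
    (Lxx Lxy Lyx Lyy : ℝ) (hLxy : 0 < Lxy) (hLyy : 0 < Lyy)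
    (Φ : E → F → ℝ)
    (hΦdiff : Differentiable ℝ (fun p : E × F => Φ p.1 p.2))
    (hlipx : ∀ x x' : E, ∀ y ∈ Y, ∀ y' ∈ Y,
      ‖gradient (fun z => Φ z y) x - gradient (fun z => Φ z y') x'‖ ≤
        Lxx * ‖x - x'‖ + Lxy * ‖y - y'‖)
    (hlipy : ∀ x x' : E, ∀ y ∈ Y, ∀ y' ∈ Y,
      ‖gradient (Φ x) y - gradient (Φ x') y'‖ ≤ Lyx * ‖x - x'‖ + Lyy * ‖y - y'‖)
    (hwc : ∀ y ∈ Y, ConvexOn ℝ Set.univ (fun x => Φ x y + γ / 2 * ‖x‖ ^ 2))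
    (hconc : ∀ x : E, ConcaveOn ℝ Y (Φ x))
    (φ : E → ℝ)
    (hφ : ∀ x : E, IsGreatest ((fun y => Φ x y - g y) '' Y) (φ x))
    (yh₀ : F) (hyh₀ : yh₀ ∈ Y)
    (μhat : ℝ)
    (hμhat : μhat = min (ε ^ 2 / (24 * γ * D ^ 2)) (Lyy / Lxy * ε / (2 * Real.sqrt 6 * D)))
    (ystar : E → F)
    (hystarY : ∀ x : E, ystar x ∈ Y)
    (hystar : ∀ x : E, IsMaxOn (fun y => Φ x y - μhat / 2 * ‖y - yh₀‖ ^ 2 - g y) Y (ystar x))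
    (φhat : E → ℝ)
    (hφhat : ∀ x : E,
      IsGreatest ((fun y => Φ x y - μhat / 2 * ‖y - yh₀‖ ^ 2 - g y) '' Y) (φhat x))
    (xε : E)
    (hgrad : HasGradientAt φhat (gradient (fun z => Φ z (ystar xε)) xε) xε)
    (hsmall : ‖gradient (fun z => Φ z (ystar xε)) xε‖ ≤ ε / (2 * Real.sqrt 6)) :
    ∀ p : E,
      IsMinOn (fun w => φ w + 1 / (2 * (1 / (2 * γ))) * ‖w - xε‖ ^ 2) Set.univ p →
        2 * γ * ‖xε - p‖ ≤ ε := by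
  intro p hmin
  set v := gradient (fun z => Φ z (ystar xε)) xε with hv
  set d := p - xε with hdd
  have hcoef : 1 / (2 * (1 / (2 * γ))) = γ := by field_simp
  -- convexity of the regularized envelopes
  have hconvφ : ConvexOn ℝ Set.univ (fun x => φ x + γ / 2 * ‖x‖ ^ 2) :=
    convexOn_sup_family Y γ Φ g hwc φ hφ
  have hφhat' : ∀ x : E,
      IsGreatest ((fun y => Φ x y - (μhat / 2 * ‖y - yh₀‖ ^ 2 + g y)) '' Y) (φhat x) := by
    intro x
    have h := hφhat x
    have heq : (fun y => Φ x y - μhat / 2 * ‖y - yh₀‖ ^ 2 - g y)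
        = fun y => Φ x y - (μhat / 2 * ‖y - yh₀‖ ^ 2 + g y) := by
      funext y; ring
    rwa [heq] at h
  have hconvφhat : ConvexOn ℝ Set.univ (fun x => φhat x + γ / 2 * ‖x‖ ^ 2) :=
    convexOn_sup_family Y γ Φ (fun y => μhat / 2 * ‖y - yh₀‖ ^ 2 + g y) hwc φhat hφhat'
  -- bounds for μhat
  have hs0 : (0:ℝ) < Real.sqrt 6 := Real.sqrt_pos.mpr (by norm_num)
  have hs2 : Real.sqrt 6 ^ 2 = 6 := Real.sq_sqrt (by norm_num)
  have hsge : (2:ℝ) ≤ Real.sqrt 6 := by nlinarith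
  have hμ0 : 0 ≤ μhat := by
    rw [hμhat]
    refine le_min (by positivity) (by positivity)
  have hμ1 : μhat ≤ ε ^ 2 / (24 * γ * D ^ 2) := by rw [hμhat]; exact min_le_left _ _
  have hμ' : μhat * (24 * γ * D ^ 2) ≤ ε ^ 2 := by
    rw [← le_div_iff₀ (by positivity)]; exact hμ1
  -- comparing φ and φhat
  have hhatle : φhat p ≤ φ p := by
    obtain ⟨y, hy, he⟩ := (hφhat p).1
    have h1 : Φ p y - g y ≤ φ p := (hφ p).2 ⟨y, hy, rfl⟩
    have h2 : 0 ≤ μhat / 2 * ‖y - yh₀‖ ^ 2 := by positivity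
    simp only [] at he
    linarith
  have hlehat : φ xε ≤ φhat xε + μhat / 2 * D ^ 2 := by
    obtain ⟨y, hy, he⟩ := (hφ xε).1
    have h1 : Φ xε y - μhat / 2 * ‖y - yh₀‖ ^ 2 - g y ≤ φhat xε := (hφhat xε).2 ⟨y, hy, rfl⟩
    have h2 : ‖y - yh₀‖ ≤ D := hdiam y hy yh₀ hyh₀
    have h3 : ‖y - yh₀‖ ^ 2 ≤ D ^ 2 := by nlinarith [norm_nonneg (y - yh₀)]
    simp only [] at he
    nlinarith
  -- Step 1 : strong convexity of the prox subproblem via the midpoint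
  have hkey1 : 5 * γ / 4 * ‖xε - p‖ ^ 2 ≤ φ xε - φ p := by
    have hmid := hconvφ.2 (Set.mem_univ xε) (Set.mem_univ p)
      (by norm_num : (0:ℝ) ≤ 1/2) (by norm_num : (0:ℝ) ≤ 1/2) (by norm_num)
    simp only [smul_eq_mul] at hmid
    have hm := isMinOn_iff.mp hmin ((1/2 : ℝ) • xε + (1/2 : ℝ) • p) (Set.mem_univ _)
    simp only [hcoef] at hm
    have hm1 : (1/2 : ℝ) • xε + (1/2 : ℝ) • p - xε = (1/2 : ℝ) • (p - xε) := by module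
    have hm2 : (1/2 : ℝ) • xε + (1/2 : ℝ) • p = (1/2 : ℝ) • (xε + p) := by module
    have e1 : ‖(1/2 : ℝ) • xε + (1/2 : ℝ) • p - xε‖ ^ 2 = 1/4 * ‖xε - p‖ ^ 2 := by
      rw [hm1, norm_smul, norm_sub_rev p xε, mul_pow]
      simp [Real.norm_eq_abs]
      norm_num
    have e2 : ‖(1/2 : ℝ) • xε + (1/2 : ℝ) • p‖ ^ 2 = 1/4 * ‖xε + p‖ ^ 2 := by
      rw [hm2, norm_smul, mul_pow]
      simp [Real.norm_eq_abs]
      norm_num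
    have epar : ‖xε + p‖ ^ 2 + ‖xε - p‖ ^ 2 = 2 * (‖xε‖ ^ 2 + ‖p‖ ^ 2) := by
      have h := parallelogram_law_with_norm ℝ xε p
      linear_combination h
    have erev : ‖p - xε‖ = ‖xε - p‖ := norm_sub_rev _ _
    rw [erev] at hm
    have e1g : γ * ‖(1/2 : ℝ) • xε + (1/2 : ℝ) • p - xε‖ ^ 2
        = γ * (1/4 * ‖xε - p‖ ^ 2) := by rw [e1]
    have e2g : γ * ‖(1/2 : ℝ) • xε + (1/2 : ℝ) • p‖ ^ 2
        = γ * (1/4 * ‖xε + p‖ ^ 2) := by rw [e2]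
    have eparg : γ * (‖xε + p‖ ^ 2 + ‖xε - p‖ ^ 2) = γ * (2 * (‖xε‖ ^ 2 + ‖p‖ ^ 2)) := by
      rw [epar]
    linarith [hm, hmid, e1g, e2g, eparg]
  -- Step 2 : first-order bound from the gradient of φhat
  have hc : HasDerivAt (fun t : ℝ => xε + t • d) d 0 := by
    simpa using ((hasDerivAt_id (0:ℝ)).smul_const d).const_add xε
  have hd1 : HasDerivAt (fun t : ℝ => φhat (xε + t • d)) ⟪v, d⟫ 0 := by
    have hF : HasFDerivAt φhat (InnerProductSpace.toDual ℝ E v)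
        ((fun t : ℝ => xε + t • d) 0) := by
      simpa using hgrad.hasFDerivAt
    have h := hF.comp_hasDerivAt 0 hc
    simpa [InnerProductSpace.toDual_apply_apply, Function.comp_def] using h
  have hd2 : HasDerivAt (fun t : ℝ => γ / 2 * ‖xε + t • d‖ ^ 2) (γ * ⟪xε, d⟫) 0 := by
    have heq : (fun t : ℝ => γ / 2 * ‖xε + t • d‖ ^ 2)
        = fun t : ℝ => γ/2 * ‖xε‖^2 + t * (γ * ⟪xε, d⟫) + t^2 * (γ/2 * ‖d‖^2) := by
      funext t
      have h1 : ‖xε + t • d‖^2 = ‖xε‖^2 + 2*⟪xε, t • d⟫ + ‖t • d‖^2 := norm_add_sq_real _ _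
      rw [h1, real_inner_smul_right, norm_smul, mul_pow]
      simp only [Real.norm_eq_abs, sq_abs]
      ring
    rw [heq]
    have h := (((hasDerivAt_id (0:ℝ)).mul_const (γ * ⟪xε, d⟫)).const_add
      (γ/2 * ‖xε‖^2)).add ((hasDerivAt_pow 2 (0:ℝ)).mul_const (γ/2 * ‖d‖^2))
    simpa [Pi.add_def] using h
  have hsub := convex_dirderiv_le hconvφhat (hd1.add hd2)
  have hxd : xε + d = p := by rw [hdd]; abel
  rw [hxd] at hsub
  have hkey2 : φhat xε - φhat p ≤ ‖v‖ * ‖xε - p‖ + γ/2 * ‖xε - p‖ ^ 2 := by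
    have h1 : ⟪v, d⟫ = ⟪v, p⟫ - ⟪v, xε⟫ := by rw [hdd, inner_sub_right]
    have h2 : γ * ⟪xε, d⟫ = γ * (⟪xε, p⟫ - ‖xε‖^2) := by
      rw [hdd, inner_sub_right, real_inner_self_eq_norm_sq]
    have h3 : γ/2 * ‖xε - p‖^2 = γ/2 * (‖xε‖^2 - 2*⟪xε, p⟫ + ‖p‖^2) := by
      rw [norm_sub_sq_real]
    have h4 : ⟪v, xε⟫ - ⟪v, p⟫ ≤ ‖v‖ * ‖xε - p‖ := by
      have h := real_inner_le_norm v (xε - p)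
      rwa [inner_sub_right] at h
    linarith
  -- Combine and finish
  have hchain : 5 * γ / 4 * ‖xε - p‖ ^ 2 ≤
      ‖v‖ * ‖xε - p‖ + γ/2 * ‖xε - p‖ ^ 2 + μhat / 2 * D ^ 2 := by
    linarith
  by_contra hcon
  push_neg at hcon
  have hb' : ‖v‖ * (2 * Real.sqrt 6) ≤ ε := by
    rw [← le_div_iff₀ (by positivity)]; exact hsmall
  exact wcmc_arith hγ hε (norm_nonneg _) (norm_nonneg _) hsge hb' hμ' hchain hcon
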